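/- arXiv:2207.01617 — 3 statements merged into one kernel-verified Lean document; each statement's English description precedes it below -/
import Mathlib

section
/- For every function f ∈ H¹(ℝ∖{0}) one has ∫_ℝ |f'(x)|² dx − |f(0⁺) − f(0⁻)|² ≥ −4 ∫_ℝ |f(x)|² dx, with equality attained by f(x) = sgn(x)e^{−2|x|}. -/
open Real Filter MeasureTheory
open Set

noncomputable def psi1 : ℝ → ℝ := fun x => Real.sign x * Real.exp (-2 * |x|)

lemma hasDerivAt_exp_const_mul (c x : ℝ) :
    HasDerivAt (fun y => Real.exp (c * y)) (c * Real.exp (c * x)) x := by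
  have h : HasDerivAt (fun y : ℝ => c * y) c x := by
    simpa using (hasDerivAt_id x).const_mul c
  simpa [mul_comm] using h.exp

lemma integral_exp_neg_four : ∫ x in Ioi (0:ℝ), Real.exp (-4 * x) = 1/4 := by
  have hderiv : ∀ x ∈ Ici (0:ℝ), HasDerivAt (fun y => -Real.exp (-4*y)/4) (Real.exp (-4*x)) x := by
    intro x _
    have h := (hasDerivAt_exp_const_mul (-4) x).neg.div_const 4
    refine h.congr_deriv ?_
    ring
  have hint : IntegrableOn (fun x => Real.exp (-4*x)) (Ioi (0:ℝ)) :=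
    exp_neg_integrableOn_Ioi 0 (by norm_num)
  have htop : Tendsto (fun y => -Real.exp (-4*y)/4) atTop (nhds 0) := by
    have : Tendsto (fun y : ℝ => Real.exp (-4*y)) atTop (nhds 0) :=
      Real.tendsto_exp_atBot.comp (tendsto_id.const_mul_atTop_of_neg (by norm_num))
    simpa using (this.neg.div_const 4)
  have h := integral_Ioi_of_hasDerivAt_of_tendsto' hderiv hint htop
  rw [h]
  norm_num

lemma exp_sq (a : ℝ) : Real.exp a ^ 2 = Real.exp (2 * a) := by
  rw [sq, ← Real.exp_add]; congr 1; ring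

lemma deriv_psi1_ne {x : ℝ} (hx : x ≠ 0) : deriv psi1 x = -2 * Real.exp (-2 * |x|) := by
  rcases hx.lt_or_gt with h | h
  · have hev : psi1 =ᶠ[nhds x] fun y => -Real.exp (2*y) := by
      filter_upwards [Iio_mem_nhds h] with y hy
      have hy' : y < 0 := hy
      simp only [psi1, Real.sign_of_neg hy', abs_of_neg hy']
      rw [show -2 * -y = 2 * y by ring]; ring
    have hd : HasDerivAt (fun y => -Real.exp (2*y)) (-2 * Real.exp (-2*|x|)) x := by
      have h2 := (hasDerivAt_exp_const_mul 2 x).neg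
      refine h2.congr_deriv ?_
      rw [abs_of_neg h]; ring_nf
    exact (hd.congr_of_eventuallyEq hev).deriv
  · have hev : psi1 =ᶠ[nhds x] fun y => Real.exp (-2*y) := by
      filter_upwards [Ioi_mem_nhds h] with y hy
      have hy' : (0:ℝ) < y := hy
      simp [psi1, Real.sign_of_pos hy', abs_of_pos hy']
    have hd : HasDerivAt (fun y => Real.exp (-2*y)) (-2 * Real.exp (-2*|x|)) x := by
      have h2 := hasDerivAt_exp_const_mul (-2) x
      convert h2 using 1
      rw [abs_of_pos h]
    exact (hd.congr_of_eventuallyEq hev).deriv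

lemma part2 : (∫ x : ℝ, (deriv psi1 x) ^ 2) - (2 : ℝ) ^ 2 = -4 * ∫ x : ℝ, (psi1 x) ^ 2 := by
  have habs : ∫ x : ℝ, Real.exp (-4 * |x|) = 1/2 := by
    rw [integral_comp_abs (f := fun x => Real.exp (-4 * x)), integral_exp_neg_four]; norm_num
  have key : ∀ x : ℝ, Real.exp (-2 * |x|) ^ 2 = Real.exp (-4 * |x|) := by
    intro x; rw [exp_sq]; congr 1; ring
  have h1 : (∫ x : ℝ, (deriv psi1 x) ^ 2) = 4 * (1/2 : ℝ) := by
    rw [← habs, ← integral_const_mul]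
    apply integral_congr_ae
    filter_upwards [compl_mem_ae_iff.mpr (volume_singleton (a := (0:ℝ)))] with x hx
    have hx0 : x ≠ 0 := hx
    rw [deriv_psi1_ne hx0, mul_pow, key]
    norm_num
  have h2 : (∫ x : ℝ, (psi1 x) ^ 2) = 1/2 := by
    rw [← habs]
    apply integral_congr_ae
    filter_upwards [compl_mem_ae_iff.mpr (volume_singleton (a := (0:ℝ)))] with x hx
    have hx0 : x ≠ 0 := hx
    simp only [psi1, mul_pow, key]
    rcases hx0.lt_or_gt with h|h
    · rw [Real.sign_of_neg h]; norm_num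
    · rw [Real.sign_of_pos h]; norm_num
  rw [h1, h2]; norm_num


lemma normsq_complex (z : ℂ) : ‖z‖^2 = z.re^2 + z.im^2 := by
  rw [Complex.sq_norm, Complex.normSq_apply]; ring

lemma amgm (u u' v v' : ℝ) :
    |2 * (u * u' + v * v')| ≤ 2 * (u^2 + v^2) + (u'^2 + v'^2)/2 := by
  rw [abs_le]
  constructor <;> nlinarith [sq_nonneg (2*u + u'), sq_nonneg (2*u - u'),
    sq_nonneg (2*v + v'), sq_nonneg (2*v - v')]

lemma half_bound (f f' : ℝ → ℂ) (L : ℂ)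
    (hderiv : ∀ x : ℝ, 0 < x → HasDerivAt f (f' x) x)
    (hf2 : Integrable (fun x => ‖f x‖ ^ 2))
    (hf'2 : Integrable (fun x => ‖f' x‖ ^ 2))
    (hL : Tendsto f (nhdsWithin 0 (Ioi 0)) (nhds L)) :
    ‖L‖^2 ≤ ∫ x in Ioi (0:ℝ), (2 * ‖f x‖^2 + ‖f' x‖^2 / 2) := by
  set g : ℝ → ℝ := fun x => ‖f x‖^2 with hg_def
  set g' : ℝ → ℝ := fun x => 2 * ((f x).re * (f' x).re + (f x).im * (f' x).im) with hg'_def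
  set M : ℝ → ℝ := fun x => 2 * ‖f x‖^2 + ‖f' x‖^2 / 2 with hM_def
  -- derivative of g
  have hgderiv : ∀ x : ℝ, 0 < x → HasDerivAt g (g' x) x := by
    intro x hx
    have hf := hderiv x hx
    have hre : HasDerivAt (fun y => (f y).re) ((f' x).re) x :=
      (Complex.reCLM.hasFDerivAt.comp_hasDerivAt x hf)
    have him : HasDerivAt (fun y => (f y).im) ((f' x).im) x :=
      (Complex.imCLM.hasFDerivAt.comp_hasDerivAt x hf)
    have h : HasDerivAt (fun y => (f y).re^2 + (f y).im^2) (g' x) x := by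
      have := ((hre.mul hre).add (him.mul him))
      refine HasDerivAt.congr_deriv (HasDerivAt.congr_of_eventuallyEq this (Eventually.of_forall fun y => ?_)) ?_
      · simp only [Pi.add_apply, Pi.mul_apply]; ring
      · rw [hg'_def]; ring
    have heq : g = fun y => (f y).re^2 + (f y).im^2 := by
      funext y; simp only [hg_def, normsq_complex]
    rw [heq]; exact h
  -- bound on g'
  have hbound : ∀ x : ℝ, |g' x| ≤ M x := by
    intro x
    have h := amgm (f x).re (f' x).re (f x).im (f' x).im
    have hMeq : M x = 2 * ((f x).re^2 + (f x).im^2) + ((f' x).re^2 + (f' x).im^2)/2 := by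
      rw [hM_def]; simp only [normsq_complex]
    rw [hMeq, hg'_def]
    exact h
  have hMnn : ∀ x : ℝ, 0 ≤ M x := by
    intro x; simp only [hM_def]; positivity
  -- integrability of M
  have hMint : Integrable M := (hf2.const_mul 2).add (hf'2.div_const 2)
  -- measurability of f and f'
  have hmf : AEStronglyMeasurable f (volume.restrict (Ioi 0)) := by
    have hc : ContinuousOn f (Ioi 0) := fun x hx => ((hderiv x hx).continuousAt).continuousWithinAt
    exact hc.aestronglyMeasurable measurableSet_Ioi
  have hmf' : AEStronglyMeasurable f' (volume.restrict (Ioi 0)) := by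
    have h1 : ∀ᵐ x ∂(volume.restrict (Ioi 0)), deriv f x = f' x := by
      rw [ae_restrict_iff' measurableSet_Ioi]
      exact Eventually.of_forall fun x hx => (hderiv x hx).deriv
    exact (stronglyMeasurable_deriv f).aestronglyMeasurable.congr h1
  -- integrability of g'
  have hg'meas : AEStronglyMeasurable g' (volume.restrict (Ioi 0)) := by
    apply AEStronglyMeasurable.const_mul
    exact ((Complex.continuous_re.comp_aestronglyMeasurable hmf).mul
      (Complex.continuous_re.comp_aestronglyMeasurable hmf')).add
      ((Complex.continuous_im.comp_aestronglyMeasurable hmf).mul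
      (Complex.continuous_im.comp_aestronglyMeasurable hmf'))
  have hg'int : IntegrableOn g' (Ioi (0:ℝ)) := by
    apply Integrable.mono' (hMint.integrableOn) hg'meas
    exact Eventually.of_forall fun x => by simpa [Real.norm_eq_abs] using hbound x
  -- key bound for each a > 0
  have hkey : ∀ a : ℝ, 0 < a → g a ≤ ∫ x in Ioi (0:ℝ), M x := by
    intro a ha
    have hIa : IntegrableOn g' (Ioi a) := hg'int.mono_set (Ioi_subset_Ioi ha.le)
    -- FTC on [a, b]
    have hftc : ∀ b : ℝ, a ≤ b → g b = g a + ∫ x in a..b, g' x := by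
      intro b hb
      have hsub : uIcc a b ⊆ Ioi (0:ℝ) := by
        rw [uIcc_of_le hb]
        exact fun x hx => lt_of_lt_of_le ha hx.1
      have hii : IntervalIntegrable g' volume a b :=
        (hg'int.mono_set hsub).intervalIntegrable
      have := intervalIntegral.integral_eq_sub_of_hasDerivAt
        (fun x hx => hgderiv x (hsub hx)) hii
      linarith [this]
    -- limit of g at infinity
    have htend_int : Tendsto (fun b => ∫ x in a..b, g' x) atTop (nhds (∫ x in Ioi a, g' x)) :=
      intervalIntegral_tendsto_integral_Ioi a hIa tendsto_id
    have htendg : Tendsto g atTop (nhds (g a + ∫ x in Ioi a, g' x)) := by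
      apply Tendsto.congr' _ ((tendsto_const_nhds).add htend_int)
      filter_upwards [eventually_ge_atTop a] with b hb
      exact (hftc b hb).symm
    set ℓ := g a + ∫ x in Ioi a, g' x with hℓ
    have hℓnn : 0 ≤ ℓ := by
      apply ge_of_tendsto htendg
      filter_upwards with b
      simp only [hg_def]; positivity
    have hℓzero : ℓ = 0 := by
      by_contra hne
      have hℓpos : 0 < ℓ := lt_of_le_of_ne hℓnn (Ne.symm hne)
      obtain ⟨c, hc⟩ := eventually_atTop.mp
        ((htendg.eventually (eventually_ge_nhds (by linarith : ℓ/2 < ℓ))).and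
          (eventually_ge_atTop (max a 1)))
      have hconst : Integrable (fun _ : ℝ => ℓ/2) (volume.restrict (Ioi (max c 0))) := by
        apply Integrable.mono' (hf2.integrableOn (s := Ioi (max c 0))) aestronglyMeasurable_const
        rw [ae_restrict_iff' measurableSet_Ioi]
        apply Eventually.of_forall
        intro x hx
        have hx' : c ≤ x := le_trans (le_max_left c 0) (le_of_lt hx)
        have hgx := (hc x hx').1
        rw [Real.norm_eq_abs, abs_of_pos (by linarith)]
        exact hgx
      rcases integrable_const_iff.mp hconst with h|h
      · have : (0:ℝ) < ℓ/2 := by linarith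
        rw [h] at this; exact lt_irrefl 0 this
      · replace h := h.measure_univ_lt_top; rw [Measure.restrict_apply_univ, Real.volume_Ioi] at h
        exact lt_irrefl _ h
    have hga : g a = -(∫ x in Ioi a, g' x) := by linarith [hℓzero, hℓ]
    have h1 : g a ≤ ∫ x in Ioi a, |g' x| := by
      rw [hga]
      calc -(∫ x in Ioi a, g' x) ≤ |∫ x in Ioi a, g' x| := neg_le_abs _
        _ ≤ ∫ x in Ioi a, |g' x| := by
            simpa [Real.norm_eq_abs] using norm_integral_le_integral_norm (μ := volume.restrict (Ioi a)) g'
    have h2 : (∫ x in Ioi a, |g' x|) ≤ ∫ x in Ioi a, M x :=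
      integral_mono hIa.abs (hMint.integrableOn.mono_set (Ioi_subset_Ioi ha.le))
        fun x => hbound x
    have h3 : (∫ x in Ioi a, M x) ≤ ∫ x in Ioi (0:ℝ), M x :=
      setIntegral_mono_set hMint.integrableOn
        (Eventually.of_forall fun x => hMnn x) ((Ioi_subset_Ioi ha.le).eventuallyLE)
    linarith
  -- conclude by taking a → 0+
  have htendL : Tendsto g (nhdsWithin 0 (Ioi 0)) (nhds (‖L‖^2)) := by
    have := (hL.norm).pow 2
    exact this
  apply le_of_tendsto htendL
  filter_upwards [self_mem_nhdsWithin] with a ha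
  exact hkey a ha

lemma half_bound_neg (f f' : ℝ → ℂ) (L : ℂ)
    (hderiv : ∀ x : ℝ, x < 0 → HasDerivAt f (f' x) x)
    (hf2 : Integrable (fun x => ‖f x‖ ^ 2))
    (hf'2 : Integrable (fun x => ‖f' x‖ ^ 2))
    (hL : Tendsto f (nhdsWithin 0 (Iio 0)) (nhds L)) :
    ‖L‖^2 ≤ ∫ x in Iio (0:ℝ), (2 * ‖f x‖^2 + ‖f' x‖^2 / 2) := by
  have hderivF : ∀ x : ℝ, 0 < x → HasDerivAt (fun y => f (-y)) (-f' (-x)) x := by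
    intro x hx
    have h := (hderiv (-x) (by linarith)).scomp x (hasDerivAt_neg x)
    simpa [Function.comp_def] using h
  have hF2 : Integrable (fun x => ‖f (-x)‖ ^ 2) := hf2.comp_neg
  have hF'2 : Integrable (fun x => ‖-f' (-x)‖ ^ 2) := by
    simpa using hf'2.comp_neg
  have hneg : Tendsto (fun x : ℝ => -x) (nhdsWithin 0 (Ioi 0)) (nhdsWithin 0 (Iio 0)) := by
    rw [tendsto_nhdsWithin_iff]
    constructor
    · simpa using ((continuous_neg.tendsto (0:ℝ)).mono_left nhdsWithin_le_nhds)
    · filter_upwards [self_mem_nhdsWithin] with x hx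
      simpa using hx
  have hLF : Tendsto (fun y => f (-y)) (nhdsWithin 0 (Ioi 0)) (nhds L) := hL.comp hneg
  have hhalf := half_bound (fun y => f (-y)) (fun y => -f' (-y)) L hderivF hF2 hF'2 hLF
  have hEq : (∫ x in Ioi (0:ℝ), (2 * ‖f (-x)‖^2 + ‖-f' (-x)‖^2 / 2))
      = ∫ x in Iio (0:ℝ), (2 * ‖f x‖^2 + ‖f' x‖^2 / 2) := by
    have h := integral_comp_neg_Ioi (0:ℝ) (fun x => 2 * ‖f x‖^2 + ‖f' x‖^2 / 2)
    rw [neg_zero, integral_Iic_eq_integral_Iio] at h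
    simpa using h
  calc ‖L‖^2 ≤ _ := hhalf
    _ = _ := hEq

theorem stmt_4 :
    (∀ (f f' : ℝ → ℂ) (Lp Lm : ℂ),
      (∀ x : ℝ, x ≠ 0 → HasDerivAt f (f' x) x) →
      Integrable (fun x => ‖f x‖ ^ 2) →
      Integrable (fun x => ‖f' x‖ ^ 2) →
      Tendsto f (nhdsWithin 0 (Set.Ioi 0)) (nhds Lp) →
      Tendsto f (nhdsWithin 0 (Set.Iio 0)) (nhds Lm) →
      (∫ x : ℝ, ‖f' x‖ ^ 2) - ‖Lp - Lm‖ ^ 2 ≥ -4 * ∫ x : ℝ, ‖f x‖ ^ 2) ∧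
    ((∫ x : ℝ, (deriv psi1 x) ^ 2) - (2 : ℝ) ^ 2 = -4 * ∫ x : ℝ, (psi1 x) ^ 2) := by
  constructor
  · intro f f' Lp Lm hderiv hf2 hf'2 hLp hLm
    have hP := half_bound f f' Lp (fun x hx => hderiv x (ne_of_gt hx)) hf2 hf'2 hLp
    have hM := half_bound_neg f f' Lm (fun x hx => hderiv x (ne_of_lt hx)) hf2 hf'2 hLm
    have hMint : Integrable (fun x : ℝ => 2 * ‖f x‖^2 + ‖f' x‖^2 / 2) :=
      (hf2.const_mul 2).add (hf'2.div_const 2)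
    have hsplit : (∫ x in Iio (0:ℝ), (2 * ‖f x‖^2 + ‖f' x‖^2/2))
        + (∫ x in Ioi (0:ℝ), (2 * ‖f x‖^2 + ‖f' x‖^2/2))
        = ∫ x : ℝ, (2 * ‖f x‖^2 + ‖f' x‖^2/2) := by
      rw [← integral_Ici_eq_integral_Ioi]
      exact intervalIntegral.integral_Iio_add_Ici hMint.integrableOn hMint.integrableOn
    have htot : (∫ x : ℝ, (2 * ‖f x‖^2 + ‖f' x‖^2/2))
        = 2 * (∫ x : ℝ, ‖f x‖^2) + (∫ x : ℝ, ‖f' x‖^2)/2 := by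
      rw [integral_add (hf2.const_mul 2) (hf'2.div_const 2), integral_const_mul, integral_div]
    have htri : ‖Lp - Lm‖ ≤ ‖Lp‖ + ‖Lm‖ := norm_sub_le _ _
    have h1 : ‖Lp - Lm‖^2 ≤ 2*‖Lp‖^2 + 2*‖Lm‖^2 := by
      nlinarith [sq_nonneg (‖Lp‖ - ‖Lm‖), norm_nonneg (Lp - Lm), norm_nonneg Lp, norm_nonneg Lm]
    linarith [hP, hM, hsplit, htot, h1]
  · exact part2
end

section
/- Fix θ ∈ (0, π/2) and let Γ_θ = {(x,y): x ≥ 0, |y| = x tan θ}. Let Ω₊, Ω₋ be the two connected components of ℝ²∖Γ_θ (the sectors of opening 2θ and 2π−2θ). For u ∈ H¹(ℝ²) define Ju = u on Ω₊ and Ju = −u on Ω₋. Then Ju ∈ H¹(ℝ²∖Γ_θ), ‖Ju‖_{L²} = ‖u‖_{L²}, the jump of Ju across Γ_θ equals 2u|_{Γ_θ}, and consequently ∫_{ℝ²∖Γ_θ}|∇(Ju)|² − ∫_{Γ_θ}|[Ju]|² dσ = ∫_{ℝ²}|∇u|² − 4∫_{Γ_θ}|u|² dσ. -/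
open MeasureTheory Filter Set Real

/-- The broken line `Γ_θ = {(x,y) : x ≥ 0, |y| = x tan θ}`. -/
def brokenLine (θ : ℝ) : Set (ℝ × ℝ) := {p | 0 ≤ p.1 ∧ |p.2| = p.1 * Real.tan θ}

/-- The inner sector `Ω₊` of opening `2θ`. -/
def sectorPlus (θ : ℝ) : Set (ℝ × ℝ) := {p | |p.2| < p.1 * Real.tan θ}

/-- The outer sector `Ω₋` of opening `2π − 2θ`. -/
def sectorMinus (θ : ℝ) : Set (ℝ × ℝ) := (sectorPlus θ ∪ brokenLine θ)ᶜ

open Classical in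
/-- The sign-flip map `J`: `Ju = u` on `Ω₊` and `Ju = −u` on `Ω₋`. -/
noncomputable def signFlip (θ : ℝ) (u : ℝ × ℝ → ℂ) : ℝ × ℝ → ℂ :=
  fun p => if p ∈ sectorPlus θ then u p else -u p

/-- A unit normal to `Γ_θ`, pointing into `Ω₊`. -/
noncomputable def brokenNormal (θ : ℝ) (p : ℝ × ℝ) : ℝ × ℝ :=
  if 0 < p.2 then (Real.sin θ, -Real.cos θ) else (Real.sin θ, Real.cos θ)

/-- Integral over `Γ_θ` with respect to arclength, via unit-speed parametrization. -/
noncomputable def lineIntSq (θ : ℝ) (f : ℝ × ℝ → ℂ) : ℝ :=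
  ∫ t in Set.Ioi (0 : ℝ),
    (‖f (t * Real.cos θ, t * Real.sin θ)‖ ^ 2 + ‖f (t * Real.cos θ, -(t * Real.sin θ))‖ ^ 2)

/-- A line `{p | p.2 = c * p.1}` in the plane is Lebesgue-null. -/
lemma line_null (c : ℝ) : (volume : Measure (ℝ × ℝ)) {p : ℝ × ℝ | p.2 = c * p.1} = 0 := by
  set f : (ℝ × ℝ) →ₗ[ℝ] ℝ := LinearMap.snd ℝ ℝ ℝ - c • LinearMap.fst ℝ ℝ ℝ with hf
  have hker : {p : ℝ × ℝ | p.2 = c * p.1} = (LinearMap.ker f : Set (ℝ × ℝ)) := by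
    ext p
    simp [hf, LinearMap.mem_ker, sub_eq_zero, mul_comm]
  have hne : LinearMap.ker f ≠ ⊤ := by
    intro h
    have h01 : ((0 : ℝ), (1 : ℝ)) ∈ LinearMap.ker f := h ▸ Submodule.mem_top
    simp [hf, LinearMap.mem_ker] at h01
  rw [hker]
  exact MeasureTheory.Measure.addHaar_submodule _ _ hne

lemma brokenLine_null (θ : ℝ) : (volume : Measure (ℝ × ℝ)) (brokenLine θ) = 0 := by
  have hsub : brokenLine θ ⊆ {p : ℝ × ℝ | p.2 = Real.tan θ * p.1} ∪
      {p : ℝ × ℝ | p.2 = -Real.tan θ * p.1} := by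
    rintro ⟨x, y⟩ ⟨hx, hy⟩
    rcases abs_cases y with ⟨h1, _⟩ | ⟨h1, _⟩
    · left; simp only [mem_setOf_eq]; rw [← h1, hy]; ring
    · right; simp only [mem_setOf_eq]
      have : -y = x * Real.tan θ := by rw [← h1, hy]
      linarith [this]
  exact measure_mono_null hsub (measure_union_null (line_null _) (line_null _))

lemma isOpen_sectorPlus (θ : ℝ) : IsOpen (sectorPlus θ) :=
  isOpen_lt (continuous_snd.abs) (continuous_fst.mul continuous_const)

lemma isClosed_union_sector (θ : ℝ) (hθ : θ ∈ Set.Ioo 0 (Real.pi / 2)) :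
    IsClosed (sectorPlus θ ∪ brokenLine θ) := by
  have htan : 0 < Real.tan θ := Real.tan_pos_of_pos_of_lt_pi_div_two hθ.1 hθ.2
  have : sectorPlus θ ∪ brokenLine θ = {p : ℝ × ℝ | 0 ≤ p.1 ∧ |p.2| ≤ p.1 * Real.tan θ} := by
    ext ⟨x, y⟩
    constructor
    · rintro (h | ⟨hx, hy⟩)
      · have hx : 0 < x := by
          by_contra hx
          push_neg at hx
          have : x * Real.tan θ ≤ 0 := mul_nonpos_of_nonpos_of_nonneg hx htan.le
          have h0 : |y| < x * Real.tan θ := h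
          nlinarith [abs_nonneg y]
        exact ⟨hx.le, le_of_lt h⟩
      · exact ⟨hx, le_of_eq hy⟩
    · rintro ⟨hx, hy⟩
      rcases lt_or_eq_of_le hy with h | h
      · exact Or.inl h
      · exact Or.inr ⟨hx, h⟩
  rw [this]
  exact IsClosed.inter (isClosed_le continuous_const continuous_fst)
    (isClosed_le continuous_snd.abs (continuous_fst.mul continuous_const))

lemma isClosed_brokenLine (θ : ℝ) : IsClosed (brokenLine θ) :=
  IsClosed.inter (isClosed_le continuous_const continuous_fst)
    (isClosed_eq continuous_snd.abs (continuous_fst.mul continuous_const))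

theorem stmt_11 (θ : ℝ) (hθ : θ ∈ Set.Ioo 0 (Real.pi / 2))
    (u : ℝ × ℝ → ℂ) (hu : ContDiff ℝ 1 u)
    -- u ∈ H¹(ℝ²)
    (huL2 : MemLp u 2 (volume : Measure (ℝ × ℝ)))
    (hgradL2 : MemLp (fun p => ‖fderiv ℝ u p‖) 2 (volume : Measure (ℝ × ℝ))) :
    -- Ju ∈ H¹(ℝ²∖Γ_θ) with the same L²-norm
    (∀ p ∉ brokenLine θ, HasFDerivAt (signFlip θ u) (fderiv ℝ (signFlip θ u) p) p) ∧
    MemLp (signFlip θ u) 2 (volume : Measure (ℝ × ℝ)) ∧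
    (∫ p : ℝ × ℝ, ‖signFlip θ u p‖ ^ 2) = (∫ p : ℝ × ℝ, ‖u p‖ ^ 2) ∧
    -- the jump of Ju across Γ_θ equals 2u on Γ_θ
    (∀ p ∈ brokenLine θ, p ≠ 0 →
      Tendsto (fun t : ℝ =>
          signFlip θ u (p + t • brokenNormal θ p) - signFlip θ u (p - t • brokenNormal θ p))
        (nhdsWithin 0 (Set.Ioi 0)) (nhds (2 * u p))) ∧
    -- the δ'-form of Ju equals the δ-form of u with coupling 4
    (∫ p in (brokenLine θ)ᶜ, ‖fderiv ℝ (signFlip θ u) p‖ ^ 2)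
        - lineIntSq θ (fun p => 2 * u p)
      = (∫ p : ℝ × ℝ, ‖fderiv ℝ u p‖ ^ 2) - 4 * lineIntSq θ u := by
  obtain ⟨hθ0, hθ2⟩ := hθ
  have htan : 0 < Real.tan θ := Real.tan_pos_of_pos_of_lt_pi_div_two hθ0 hθ2
  have hsin : 0 < Real.sin θ :=
    Real.sin_pos_of_pos_of_lt_pi hθ0 (lt_trans hθ2 (by linarith [Real.pi_pos]))
  have hcos : 0 < Real.cos θ := Real.cos_pos_of_mem_Ioo ⟨by linarith [Real.pi_pos], hθ2⟩
  have hcos1 : Real.cos θ ≤ 1 := Real.cos_le_one θ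
  have hOpenP := isOpen_sectorPlus θ
  have hOpenM : IsOpen (sectorMinus θ) := (isClosed_union_sector θ ⟨hθ0, hθ2⟩).isOpen_compl
  have heqP : ∀ p ∈ sectorPlus θ, signFlip θ u =ᶠ[nhds p] u := fun p hp =>
    Filter.eventuallyEq_of_mem (hOpenP.mem_nhds hp) (fun q hq => if_pos hq)
  have heqM : ∀ p ∈ sectorMinus θ, signFlip θ u =ᶠ[nhds p] (fun q => -u q) := fun p hp =>
    Filter.eventuallyEq_of_mem (hOpenM.mem_nhds hp) (fun q hq => if_neg (fun h => hq (Or.inl h)))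
  have hcover : ∀ p ∉ brokenLine θ, p ∈ sectorPlus θ ∨ p ∈ sectorMinus θ := by
    intro p hp
    by_cases h : p ∈ sectorPlus θ
    · exact Or.inl h
    · exact Or.inr (fun hmem => hmem.elim h hp)
  have hdiff : ∀ p ∉ brokenLine θ, DifferentiableAt ℝ (signFlip θ u) p := by
    intro p hp
    rcases hcover p hp with h | h
    · exact ((heqP p h).differentiableAt_iff).mpr (hu.differentiable one_ne_zero p)
    · exact ((heqM p h).differentiableAt_iff).mpr ((hu.differentiable one_ne_zero p).neg)
  have hnormderiv : ∀ p ∉ brokenLine θ, ‖fderiv ℝ (signFlip θ u) p‖ = ‖fderiv ℝ u p‖ := by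
    intro p hp
    rcases hcover p hp with h | h
    · rw [(heqP p h).fderiv_eq]
    · rw [(heqM p h).fderiv_eq, fderiv_fun_neg, norm_neg]
  have hnorm : ∀ p, ‖signFlip θ u p‖ = ‖u p‖ := by
    intro p; unfold signFlip; split_ifs <;> simp
  refine ⟨?_, ?_, ?_, ?_, ?_⟩
  · intro p hp; exact (hdiff p hp).hasFDerivAt
  · refine MemLp.of_le huL2 ?_ (Filter.Eventually.of_forall fun p => le_of_eq (by rw [hnorm p]))
    refine StronglyMeasurable.aestronglyMeasurable ?_
    unfold signFlip
    exact StronglyMeasurable.ite hOpenP.measurableSet hu.continuous.stronglyMeasurable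
      hu.continuous.neg.stronglyMeasurable
  · have : (fun p : ℝ × ℝ => ‖signFlip θ u p‖ ^ 2) = fun p => ‖u p‖ ^ 2 := by
      funext p; rw [hnorm p]
    rw [this]
  · rintro ⟨x, y⟩ ⟨hx, hy⟩ hp0
    have hxpos : 0 < x := by
      rcases lt_or_eq_of_le hx with h | h
      · exact h
      · exfalso
        have hy0 : y = 0 := abs_eq_zero.mp (by rw [hy, ← h]; ring)
        exact hp0 (Prod.ext_iff.mpr ⟨h.symm, hy0⟩)
    have hδ : 0 < 2 * x * Real.tan θ := by positivity
    have key : ∀ t ∈ Set.Ioo (0 : ℝ) (2 * x * Real.tan θ),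
        ((x, y) + t • brokenNormal θ (x, y)) ∈ sectorPlus θ ∧
        ((x, y) - t • brokenNormal θ (x, y)) ∉ sectorPlus θ := by
      rintro t ⟨ht0, htlt⟩
      have hAA : t * Real.cos θ ≤ t * 1 := mul_le_mul_of_nonneg_left hcos1 ht0.le
      have hBB : 0 ≤ t * Real.sin θ * Real.tan θ :=
        mul_nonneg (mul_nonneg ht0.le hsin.le) htan.le
      have hCC : 0 < t * Real.cos θ := mul_pos ht0 hcos
      rcases abs_cases y with ⟨h1, _⟩ | ⟨h1, h2⟩
      · -- y ≥ 0 (in fact y = x tan θ > 0)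
        have hyy : y = x * Real.tan θ := by rw [← h1, hy]
        have hypos : 0 < y := by rw [hyy]; positivity
        have hn : brokenNormal θ (x, y) = (Real.sin θ, -Real.cos θ) := if_pos hypos
        rw [hn]
        have e1 : (x, y) + t • ((Real.sin θ : ℝ), -Real.cos θ)
            = (x + t * Real.sin θ, y - t * Real.cos θ) := by
          rw [Prod.smul_mk, Prod.mk_add_mk]
          congr 1 <;> simp <;> ring
        have e2 : (x, y) - t • ((Real.sin θ : ℝ), -Real.cos θ)
            = (x - t * Real.sin θ, y + t * Real.cos θ) := by
          rw [Prod.smul_mk, Prod.mk_sub_mk]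
          congr 1 <;> simp <;> ring
        rw [e1, e2]
        constructor
        · show |y - t * Real.cos θ| < (x + t * Real.sin θ) * Real.tan θ
          rw [abs_lt]
          constructor
          · nlinarith
          · nlinarith
        · show ¬ |y + t * Real.cos θ| < (x - t * Real.sin θ) * Real.tan θ
          rw [not_lt, abs_of_pos (by positivity)]
          nlinarith
      · -- y < 0 (in fact y = -x tan θ)
        have hyy : y = -(x * Real.tan θ) := by
          have : -y = x * Real.tan θ := by rw [← h1, hy]
          linarith
        have hn : brokenNormal θ (x, y) = (Real.sin θ, Real.cos θ) := if_neg (not_lt.mpr h2.le)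
        rw [hn]
        have e1 : (x, y) + t • ((Real.sin θ : ℝ), Real.cos θ)
            = (x + t * Real.sin θ, y + t * Real.cos θ) := by
          rw [Prod.smul_mk, Prod.mk_add_mk]
          congr 1 <;> simp <;> ring
        have e2 : (x, y) - t • ((Real.sin θ : ℝ), Real.cos θ)
            = (x - t * Real.sin θ, y - t * Real.cos θ) := by
          rw [Prod.smul_mk, Prod.mk_sub_mk]
          congr 1 <;> simp <;> ring
        rw [e1, e2]
        constructor
        · show |y + t * Real.cos θ| < (x + t * Real.sin θ) * Real.tan θ
          rw [abs_lt]
          constructor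
          · nlinarith
          · nlinarith
        · show ¬ |y - t * Real.cos θ| < (x - t * Real.sin θ) * Real.tan θ
          rw [not_lt, abs_of_neg (by nlinarith)]
          nlinarith
    have hEv : ∀ᶠ t in nhdsWithin (0 : ℝ) (Set.Ioi 0),
        (fun t : ℝ => u ((x, y) + t • brokenNormal θ (x, y))
            + u ((x, y) - t • brokenNormal θ (x, y))) t
          = (fun t : ℝ => signFlip θ u ((x, y) + t • brokenNormal θ (x, y))
            - signFlip θ u ((x, y) - t • brokenNormal θ (x, y))) t := by
      filter_upwards [Ioo_mem_nhdsGT_of_mem (Set.mem_Ico.mpr ⟨le_refl 0, hδ⟩)] with t ht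
      obtain ⟨h1, h2⟩ := key t ht
      simp only [signFlip, if_pos h1, if_neg h2]
      ring
    have hcont : Tendsto (fun t : ℝ => u ((x, y) + t • brokenNormal θ (x, y))
        + u ((x, y) - t • brokenNormal θ (x, y)))
        (nhdsWithin (0 : ℝ) (Set.Ioi 0)) (nhds (2 * u (x, y))) := by
      have hc1 : Continuous (fun t : ℝ => (x, y) + t • brokenNormal θ (x, y)) :=
        continuous_const.add (continuous_id.smul continuous_const)
      have hc2 : Continuous (fun t : ℝ => (x, y) - t • brokenNormal θ (x, y)) :=
        continuous_const.sub (continuous_id.smul continuous_const)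
      have hc : Continuous (fun t : ℝ => u ((x, y) + t • brokenNormal θ (x, y))
          + u ((x, y) - t • brokenNormal θ (x, y))) :=
        (hu.continuous.comp hc1).add (hu.continuous.comp hc2)
      have := (hc.tendsto 0).mono_left (nhdsWithin_le_nhds :
        nhdsWithin (0 : ℝ) (Set.Ioi 0) ≤ nhds 0)
      simpa [two_mul] using this
    exact Tendsto.congr' hEv hcont
  · have hB : lineIntSq θ (fun p => 2 * u p) = 4 * lineIntSq θ u := by
      unfold lineIntSq
      rw [← MeasureTheory.integral_const_mul]
      refine setIntegral_congr_fun measurableSet_Ioi (fun t _ => ?_)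
      have h2 : ‖(2 : ℂ)‖ = 2 := by simp
      simp only [norm_mul, h2]
      ring
    have hmeasΓ : MeasurableSet (brokenLine θ)ᶜ := (isClosed_brokenLine θ).measurableSet.compl
    have hA1 : (∫ p in (brokenLine θ)ᶜ, ‖fderiv ℝ (signFlip θ u) p‖ ^ 2)
        = ∫ p in (brokenLine θ)ᶜ, ‖fderiv ℝ u p‖ ^ 2 :=
      setIntegral_congr_fun hmeasΓ (fun p hp => by rw [hnormderiv p hp])
    have hA2 : (∫ p in (brokenLine θ)ᶜ, ‖fderiv ℝ u p‖ ^ 2)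
        = ∫ p : ℝ × ℝ, ‖fderiv ℝ u p‖ ^ 2 := by
      have hae : ((brokenLine θ)ᶜ : Set (ℝ × ℝ)) =ᵐ[(volume : Measure (ℝ × ℝ))] (Set.univ : Set (ℝ × ℝ)) := by
        rw [ae_eq_univ, compl_compl]
        exact brokenLine_null θ
      rw [setIntegral_congr_set hae, setIntegral_univ]
    rw [hA1, hA2, hB]
end

section
/- Let Γ ⊂ ℝ² be the x-axis. For u ∈ H¹(ℝ×(ℝ∖{0})) one has ∫_{ℝ×(ℝ∖{0})}|∇u|² dx dy − ∫_ℝ |u(x,0⁺) − u(x,0⁻)|² dx ≥ −4‖u‖²_{L²(ℝ²)}. -/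
open MeasureTheory Filter Set

-- Cauchy-Schwarz in ℝ² via ℂ
lemma cs_abs (z w : ℂ) : |z.re * w.re + z.im * w.im| ≤ ‖z‖ * ‖w‖ := by
  have h : z.re * w.re + z.im * w.im = ((starRingEnd ℂ) z * w).re := by
    simp [Complex.mul_re]
  rw [h]
  calc |((starRingEnd ℂ) z * w).re| ≤ ‖(starRingEnd ℂ) z * w‖ :=
        Complex.abs_re_le_norm _
    _ = ‖z‖ * ‖w‖ := by
        rw [norm_mul, Complex.norm_conj]

-- half-line trace lemma
lemma half_trace (v w : ℝ → ℂ) (a : ℂ)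
    (hd : ∀ y, 0 < y → HasDerivAt v (w y) y)
    (ht : Tendsto v (nhdsWithin 0 (Ioi 0)) (nhds a))
    (hvm : AEStronglyMeasurable v (volume.restrict (Ioi 0)))
    (hwm : AEStronglyMeasurable w (volume.restrict (Ioi 0)))
    (hv2 : IntegrableOn (fun y => ‖v y‖ ^ 2) (Ioi 0))
    (hw2 : IntegrableOn (fun y => ‖w y‖ ^ 2) (Ioi 0)) :
    ‖a‖ ^ 2 ≤ ∫ y in Ioi (0:ℝ), 2 * (‖v y‖ * ‖w y‖) := by
  set D : ℝ → ℝ := fun y => 2 * (‖v y‖ * ‖w y‖) with hD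
  set G : ℝ → ℝ := fun y => 2 * ((v y).re * (w y).re + (v y).im * (w y).im) with hG
  have hGle : ∀ y, |G y| ≤ D y := by
    intro y
    have := cs_abs (v y) (w y)
    simp only [hG, hD, abs_mul, abs_two]
    nlinarith [abs_nonneg ((v y).re * (w y).re + (v y).im * (w y).im)]
  have hDnn : ∀ y, 0 ≤ D y := fun y => by positivity
  have hDmeas : AEStronglyMeasurable D (volume.restrict (Ioi 0)) :=
    (aestronglyMeasurable_const.mul (hvm.norm.mul hwm.norm))
  have hD_int : IntegrableOn D (Ioi 0) := by
    refine Integrable.mono' (hv2.add hw2) hDmeas (ae_of_all _ fun y => ?_)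
    simp only [Pi.add_apply, hD]
    rw [Real.norm_eq_abs, abs_of_nonneg (by positivity)]
    nlinarith [sq_nonneg (‖v y‖ - ‖w y‖), norm_nonneg (v y), norm_nonneg (w y)]
  have hGmeas : AEStronglyMeasurable G (volume.restrict (Ioi 0)) := by
    apply aestronglyMeasurable_const.mul
    exact ((Complex.continuous_re.comp_aestronglyMeasurable hvm).mul
      (Complex.continuous_re.comp_aestronglyMeasurable hwm)).add
      ((Complex.continuous_im.comp_aestronglyMeasurable hvm).mul
      (Complex.continuous_im.comp_aestronglyMeasurable hwm))
  have hG_int : IntegrableOn G (Ioi 0) :=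
    Integrable.mono' hD_int hGmeas (ae_of_all _ fun y => by
      rw [Real.norm_eq_abs]; exact hGle y)
  -- derivative of the squared norm
  have hderiv : ∀ y, 0 < y → HasDerivAt (fun t => ‖v t‖ ^ 2) (G y) y := by
    intro y hy
    have hre : HasDerivAt (fun t => (v t).re) ((w y).re) y :=
      (Complex.reCLM.hasFDerivAt.comp_hasDerivAt y (hd y hy))
    have him : HasDerivAt (fun t => (v t).im) ((w y).im) y :=
      (Complex.imCLM.hasFDerivAt.comp_hasDerivAt y (hd y hy))
    have h1 : HasDerivAt (fun t => (v t).re * (v t).re + (v t).im * (v t).im)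
        ((w y).re * (v y).re + (v y).re * (w y).re +
          ((w y).im * (v y).im + (v y).im * (w y).im)) y := (hre.mul hre).add (him.mul him)
    have heq : (fun t => ‖v t‖ ^ 2) = fun t => (v t).re * (v t).re + (v t).im * (v t).im := by
      funext t
      rw [← Complex.normSq_apply, ← Complex.sq_norm]
    rw [heq]
    convert h1 using 1
    simp only [hG]; ring
  -- key estimate: for ε > 0, ‖v ε‖^2 ≤ δ + ∫ D for any δ > 0 (choosing good R)
  have key : ∀ ε, 0 < ε → ‖v ε‖ ^ 2 ≤ ∫ y in Ioi (0:ℝ), D y := by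
    intro ε hε
    refine le_of_forall_pos_le_add fun δ hδ => ?_
    -- find R > ε with ‖v R‖^2 ≤ δ
    obtain ⟨R, hRε, hRδ⟩ : ∃ R, ε < R ∧ ‖v R‖ ^ 2 ≤ δ := by
      by_contra hcon
      push_neg at hcon
      have hconst : IntegrableOn (fun _ : ℝ => δ) (Ioi ε) := by
        refine Integrable.mono' (hv2.mono_set (Ioi_subset_Ioi hε.le)) aestronglyMeasurable_const ?_
        rw [ae_restrict_iff' measurableSet_Ioi]
        refine ae_of_all _ fun y hyε => ?_
        rw [Real.norm_eq_abs, abs_of_pos hδ]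
        exact (hcon y hyε).le
      rcases integrable_const_iff.mp hconst with h | h
      · exact hδ.ne' h
      · have h := h.measure_univ_lt_top; rw [Measure.restrict_apply_univ, Real.volume_Ioi] at h
        exact (lt_irrefl _ h).elim
    -- FTC on [ε, R]
    have hsub : uIcc ε R ⊆ Ioi (0:ℝ) := by
      rw [uIcc_of_le (le_of_lt hRε)]
      intro y hy; exact lt_of_lt_of_le hε hy.1
    have hGi : IntervalIntegrable G volume ε R :=
      (hG_int.mono_set hsub).intervalIntegrable
    have hftc : ∫ y in ε..R, G y = ‖v R‖ ^ 2 - ‖v ε‖ ^ 2 :=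
      intervalIntegral.integral_eq_sub_of_hasDerivAt
        (fun y hy => hderiv y (hsub hy)) hGi
    have habs : |∫ y in ε..R, G y| ≤ ∫ y in Ioi (0:ℝ), D y := by
      calc |∫ y in ε..R, G y| ≤ ∫ y in ε..R, |G y| :=
            intervalIntegral.abs_integral_le_integral_abs hRε.le
        _ = ∫ y in Ioc ε R, |G y| := intervalIntegral.integral_of_le hRε.le
        _ ≤ ∫ y in Ioc ε R, D y := by
            refine setIntegral_mono_on ((hG_int.mono_set ?_).abs) (hD_int.mono_set ?_)
              measurableSet_Ioc fun y _ => hGle y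
            · exact fun y hy => lt_trans hε hy.1
            · exact fun y hy => lt_trans hε hy.1
        _ ≤ ∫ y in Ioi (0:ℝ), D y := by
            refine setIntegral_mono_set hD_int (ae_of_all _ hDnn) ?_
            exact HasSubset.Subset.eventuallyLE fun y hy => lt_trans hε hy.1
    linarith [neg_abs_le (∫ y in ε..R, G y)]
  -- take limit ε → 0⁺
  have hlim : Tendsto (fun ε => ‖v ε‖ ^ 2) (nhdsWithin 0 (Ioi 0)) (nhds (‖a‖ ^ 2)) :=
    (ht.norm).pow 2
  exact le_of_tendsto hlim (eventually_nhdsWithin_of_forall fun ε hε => key ε hε)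


lemma slice_bound (v w : ℝ → ℂ) (a b : ℂ)
    (hd : ∀ y : ℝ, y ≠ 0 → HasDerivAt v (w y) y)
    (htp : Tendsto v (nhdsWithin 0 (Ioi 0)) (nhds a))
    (htm : Tendsto v (nhdsWithin 0 (Iio 0)) (nhds b))
    (hvm : Measurable v) (hwm : Measurable w)
    (hv2 : Integrable (fun y => ‖v y‖ ^ 2))
    (hw2 : Integrable (fun y => ‖w y‖ ^ 2)) :
    ‖a - b‖ ^ 2 ≤ ∫ y : ℝ, (‖w y‖ ^ 2 + 4 * ‖v y‖ ^ 2) := by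
  have hA : ‖a‖ ^ 2 ≤ ∫ y in Ioi (0:ℝ), 2 * (‖v y‖ * ‖w y‖) :=
    half_trace v w a (fun y hy => hd y hy.ne') htp
      hvm.aestronglyMeasurable.restrict hwm.aestronglyMeasurable.restrict
      hv2.integrableOn hw2.integrableOn
  -- reflected versions
  have hpre : (Neg.neg : ℝ → ℝ) ⁻¹' (Iio 0) = Ioi 0 := by ext t; simp
  have hcompv : IntegrableOn (fun t => ‖v (-t)‖ ^ 2) (Ioi 0) := by
    have := (MeasurePreserving.integrableOn_comp_preimage
      (Measure.measurePreserving_neg (volume : Measure ℝ))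
      (Homeomorph.neg ℝ).measurableEmbedding).2 (hv2.integrableOn (s := Iio 0))
    rwa [hpre] at this
  have hcompw : IntegrableOn (fun t => ‖w (-t)‖ ^ 2) (Ioi 0) := by
    have := (MeasurePreserving.integrableOn_comp_preimage
      (Measure.measurePreserving_neg (volume : Measure ℝ))
      (Homeomorph.neg ℝ).measurableEmbedding).2 (hw2.integrableOn (s := Iio 0))
    rwa [hpre] at this
  have hneg : Tendsto (fun t : ℝ => -t) (nhdsWithin 0 (Ioi 0)) (nhdsWithin 0 (Iio 0)) := by
    apply tendsto_nhdsWithin_of_tendsto_nhds_of_eventually_within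
    · simpa using (continuous_neg.tendsto (0:ℝ)).mono_left nhdsWithin_le_nhds
    · exact eventually_nhdsWithin_of_forall fun t ht => by
        simp only [mem_Iio, Left.neg_neg_iff]; exact ht
  have hB : ‖b‖ ^ 2 ≤ ∫ t in Ioi (0:ℝ), 2 * (‖v (-t)‖ * ‖w (-t)‖) := by
    have hb := half_trace (fun t => v (-t)) (fun t => -w (-t)) b
      (fun t ht => by
        simpa [Function.comp_def] using HasDerivAt.scomp t (hd (-t) (by simpa using ht.ne')) (hasDerivAt_neg t))
      (htm.comp hneg)
      ((hvm.comp measurable_neg).aestronglyMeasurable.restrict)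
      (((hwm.comp measurable_neg).neg).aestronglyMeasurable.restrict)
      hcompv (by simpa [norm_neg] using hcompw)
    simpa [norm_neg] using hb
  have hBeq : (∫ t in Ioi (0:ℝ), 2 * (‖v (-t)‖ * ‖w (-t)‖))
      = ∫ y in Iic (0:ℝ), 2 * (‖v y‖ * ‖w y‖) := by
    simpa using integral_comp_neg_Ioi (0:ℝ) (fun y => 2 * (‖v y‖ * ‖w y‖))
  have hDfull : Integrable (fun y => 2 * (‖v y‖ * ‖w y‖)) := by
    refine Integrable.mono' (hv2.add hw2)
      (aestronglyMeasurable_const.mul (hvm.norm.aestronglyMeasurable.mul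
        hwm.norm.aestronglyMeasurable)) (ae_of_all _ fun y => ?_)
    simp only [Pi.add_apply]
    rw [Real.norm_eq_abs, abs_of_nonneg (by positivity)]
    nlinarith [sq_nonneg (‖v y‖ - ‖w y‖), norm_nonneg (v y), norm_nonneg (w y)]
  have hsplit : (∫ y in Iic (0:ℝ), 2 * (‖v y‖ * ‖w y‖))
      + (∫ y in Ioi (0:ℝ), 2 * (‖v y‖ * ‖w y‖)) = ∫ y : ℝ, 2 * (‖v y‖ * ‖w y‖) :=
    intervalIntegral.integral_Iic_add_Ioi hDfull.integrableOn hDfull.integrableOn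
  have hfin : (2:ℝ) * ∫ y : ℝ, 2 * (‖v y‖ * ‖w y‖) ≤ ∫ y : ℝ, (‖w y‖ ^ 2 + 4 * ‖v y‖ ^ 2) := by
    rw [← integral_const_mul]
    refine integral_mono (hDfull.const_mul 2) (hw2.add (hv2.const_mul 4)) fun y => ?_
    simp only
    nlinarith [sq_nonneg (‖w y‖ - 2 * ‖v y‖)]
  have h2 : ‖a - b‖ ^ 2 ≤ 2 * ‖a‖ ^ 2 + 2 * ‖b‖ ^ 2 := by
    nlinarith [norm_sub_le a b, norm_nonneg a, norm_nonneg b, sq_nonneg (‖a‖ - ‖b‖),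
      norm_nonneg (a - b)]
  linarith

theorem stmt_14 (u ux uy : ℝ × ℝ → ℂ) (Up Um : ℝ → ℂ)
    (hmu : Measurable u) (hmux : Measurable ux) (hmuy : Measurable uy)
    -- partial derivatives off the x-axis
    (hx : ∀ y : ℝ, y ≠ 0 → ∀ x : ℝ, HasDerivAt (fun s => u (s, y)) (ux (x, y)) x)
    (hy : ∀ x : ℝ, ∀ y : ℝ, y ≠ 0 → HasDerivAt (fun t => u (x, t)) (uy (x, y)) y)
    -- one-sided traces on the x-axis
    (htp : ∀ x : ℝ, Tendsto (fun y => u (x, y)) (nhdsWithin 0 (Set.Ioi 0)) (nhds (Up x)))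
    (htm : ∀ x : ℝ, Tendsto (fun y => u (x, y)) (nhdsWithin 0 (Set.Iio 0)) (nhds (Um x)))
    -- u ∈ H¹(ℝ×(ℝ∖{0}))
    (hint : Integrable (fun p : ℝ × ℝ => ‖ux p‖ ^ 2 + ‖uy p‖ ^ 2))
    (hint2 : Integrable (fun p : ℝ × ℝ => ‖u p‖ ^ 2)) :
    (∫ p : ℝ × ℝ, (‖ux p‖ ^ 2 + ‖uy p‖ ^ 2)) - (∫ x : ℝ, ‖Up x - Um x‖ ^ 2)
      ≥ -4 * ∫ p : ℝ × ℝ, ‖u p‖ ^ 2 := by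
  -- measurability of the traces
  have hseqp : Tendsto (fun n : ℕ => (1:ℝ) / (n + 1)) atTop (nhdsWithin 0 (Set.Ioi 0)) := by
    apply tendsto_nhdsWithin_of_tendsto_nhds_of_eventually_within
    · exact tendsto_one_div_add_atTop_nhds_zero_nat
    · refine Eventually.of_forall fun n => ?_
      simp only [mem_Ioi]
      positivity
  have hseqm : Tendsto (fun n : ℕ => -((1:ℝ) / (n + 1))) atTop (nhdsWithin 0 (Set.Iio 0)) := by
    apply tendsto_nhdsWithin_of_tendsto_nhds_of_eventually_within
    · simpa only [neg_zero] using (tendsto_one_div_add_atTop_nhds_zero_nat (𝕜 := ℝ)).neg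
    · refine Eventually.of_forall fun n => ?_
      simp only [mem_Iio, Left.neg_neg_iff]
      positivity
  have hUpm : Measurable Up := by
    apply measurable_of_tendsto_metrizable
      (f := fun (n : ℕ) (x : ℝ) => u (x, (1:ℝ) / (n + 1)))
    · exact fun n => hmu.comp (measurable_id.prodMk measurable_const)
    · exact tendsto_pi_nhds.2 fun x => (htp x).comp hseqp
  have hUmm : Measurable Um := by
    apply measurable_of_tendsto_metrizable
      (f := fun (n : ℕ) (x : ℝ) => u (x, -((1:ℝ) / (n + 1))))
    · exact fun n => hmu.comp (measurable_id.prodMk measurable_const)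
    · exact tendsto_pi_nhds.2 fun x => (htm x).comp hseqm
  -- integrability of |uy|²
  have huy2 : Integrable (fun p : ℝ × ℝ => ‖uy p‖ ^ 2) := by
    refine hint.mono' ((hmuy.norm.pow_const 2).aestronglyMeasurable)
      (ae_of_all _ fun p => ?_)
    rw [Real.norm_eq_abs, abs_of_nonneg (by positivity)]
    nlinarith [sq_nonneg ‖ux p‖]
  -- a.e. slice integrability
  have h1 : ∀ᵐ x : ℝ, Integrable (fun y => ‖u (x, y)‖ ^ 2) := by
    have h := hint2
    rw [Measure.volume_eq_prod] at h
    exact h.prod_right_ae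
  have h2 : ∀ᵐ x : ℝ, Integrable (fun y => ‖uy (x, y)‖ ^ 2) := by
    have h := huy2
    rw [Measure.volume_eq_prod] at h
    exact h.prod_right_ae
  set F : ℝ → ℝ := fun x => ∫ y : ℝ, (‖uy (x, y)‖ ^ 2 + 4 * ‖u (x, y)‖ ^ 2) with hF
  have hI : Integrable (fun p : ℝ × ℝ => ‖uy p‖ ^ 2 + 4 * ‖u p‖ ^ 2) :=
    huy2.add (hint2.const_mul 4)
  have hFint : Integrable F := by
    have h := hI
    rw [Measure.volume_eq_prod] at h
    exact h.integral_prod_left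
  have hkey : ∀ᵐ x : ℝ, ‖Up x - Um x‖ ^ 2 ≤ F x := by
    filter_upwards [h1, h2] with x hx1 hx2
    exact slice_bound (fun y => u (x, y)) (fun y => uy (x, y)) (Up x) (Um x)
      (fun y0 hy0 => hy x y0 hy0) (htp x) (htm x)
      (hmu.comp (measurable_const.prodMk measurable_id))
      (hmuy.comp (measurable_const.prodMk measurable_id)) hx1 hx2
  have hgapint : Integrable (fun x => ‖Up x - Um x‖ ^ 2) := by
    refine hFint.mono' (((hUpm.sub hUmm).norm.pow_const 2).aestronglyMeasurable) ?_
    filter_upwards [hkey] with x h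
    rwa [Real.norm_eq_abs, abs_of_nonneg (by positivity)]
  have hmono : (∫ x : ℝ, ‖Up x - Um x‖ ^ 2) ≤ ∫ x : ℝ, F x :=
    integral_mono_ae hgapint hFint hkey
  have hFeq : (∫ x : ℝ, F x) = ∫ p : ℝ × ℝ, (‖uy p‖ ^ 2 + 4 * ‖u p‖ ^ 2) := by
    rw [show (volume : Measure (ℝ × ℝ)) = (volume : Measure ℝ).prod volume from Measure.volume_eq_prod ℝ ℝ]
    exact (integral_prod _ (by rwa [Measure.volume_eq_prod] at hI)).symm
  have hsplit : (∫ p : ℝ × ℝ, (‖uy p‖ ^ 2 + 4 * ‖u p‖ ^ 2))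
      = (∫ p : ℝ × ℝ, ‖uy p‖ ^ 2) + 4 * ∫ p : ℝ × ℝ, ‖u p‖ ^ 2 := by
    rw [integral_add huy2 (hint2.const_mul 4), integral_const_mul]
  have huyle : (∫ p : ℝ × ℝ, ‖uy p‖ ^ 2) ≤ ∫ p : ℝ × ℝ, (‖ux p‖ ^ 2 + ‖uy p‖ ^ 2) :=
    integral_mono huy2 hint fun p => le_add_of_nonneg_left (by positivity)
  linarith
end
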